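/- Fix T ∈ ℕ, C > 0, and nonnegative reals m_1, …, m_T. Define w_T = 1/(C + Σ_{i=1}^T m_i) and w_{t-1} = w_t + m_t w_t² for 1 ≤ t ≤ T. If C = Σ_{i=1}^T m_i, then 1/(2C) ≤ w_t ≤ 1/C for all 0 ≤ t ≤ T; in particular all weights w_t lie within a factor 2 of each other. -/
import Mathlib


open Finset

theorem backward_weights_within_factor_two
    (T : ℕ) (C : ℝ) (hC : 0 < C) (m : ℕ → ℝ) (hm : ∀ t, 0 ≤ m t)
    (hCsum : C = ∑ i ∈ Finset.Icc 1 T, m i)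
    (w : ℕ → ℝ)
    (hwT : w T = 1 / (C + ∑ i ∈ Finset.Icc 1 T, m i))
    (hrec : ∀ t, 1 ≤ t → t ≤ T → w (t - 1) = w t + m t * (w t) ^ 2) :
    ∀ t, t ≤ T → 1 / (2 * C) ≤ w t ∧ w t ≤ 1 / C := by
  have hSnn : ∀ t : ℕ, 0 ≤ ∑ i ∈ Finset.Icc 1 t, m i := fun t =>
    Finset.sum_nonneg fun i _ => hm i
  have key : ∀ k, k ≤ T →
      1 / (2 * C) ≤ w (T - k) ∧ w (T - k) ≤ 1 / (C + ∑ i ∈ Finset.Icc 1 (T - k), m i) := by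
    intro k
    induction k with
    | zero =>
      intro _
      simp only [Nat.sub_zero]
      rw [hwT]
      exact ⟨le_of_eq (by rw [← hCsum]; ring), le_rfl⟩
    | succ k ih =>
      intro hk
      have hk' : k ≤ T := Nat.le_of_succ_le hk
      obtain ⟨hlo, hhi⟩ := ih hk'
      set t := T - k with ht
      have ht1 : 1 ≤ t := by omega
      have htT : t ≤ T := by omega
      have hts : T - (k + 1) = t - 1 := by omega
      have hrec' := hrec t ht1 htT
      have hSpos : (0:ℝ) < C + ∑ i ∈ Finset.Icc 1 t, m i :=
        lt_of_lt_of_le hC (le_add_of_nonneg_right (hSnn t))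
      have hwpos : 0 < w t := lt_of_lt_of_le (by positivity) hlo
      -- sum split
      have hsplit : ∑ i ∈ Finset.Icc 1 t, m i
          = (∑ i ∈ Finset.Icc 1 (t - 1), m i) + m t := by
        have : t = (t - 1) + 1 := by omega
        rw [this, Finset.sum_Icc_succ_top (by omega)]
        congr 1 <;> omega
      rw [hts]
      constructor
      · rw [hrec']
        have : 0 ≤ m t * w t ^ 2 := mul_nonneg (hm t) (sq_nonneg _)
        linarith
      · set a := C + ∑ i ∈ Finset.Icc 1 (t - 1), m i with ha
        have hapos : (0:ℝ) < a := lt_of_lt_of_le hC (le_add_of_nonneg_right (hSnn _))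
        have hb : 0 ≤ m t := hm t
        have h1 : (a + m t) * w t ≤ 1 := by
          have : C + ∑ i ∈ Finset.Icc 1 t, m i = a + m t := by rw [ha, hsplit]; ring
          rw [← this]
          calc (C + ∑ i ∈ Finset.Icc 1 t, m i) * w t
              ≤ (C + ∑ i ∈ Finset.Icc 1 t, m i) * (1 / (C + ∑ i ∈ Finset.Icc 1 t, m i)) :=
                mul_le_mul_of_nonneg_left hhi (le_of_lt hSpos)
            _ = 1 := by field_simp
        rw [hrec', le_div_iff₀ hapos]
        nlinarith [mul_nonneg (mul_nonneg hb hwpos.le) (sub_nonneg.mpr h1),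
          sq_nonneg (m t * w t), hwpos.le]
  intro t htT
  have h := key (T - t) (by omega)
  rw [Nat.sub_sub_self htT] at h
  refine ⟨h.1, le_trans h.2 ?_⟩
  apply one_div_le_one_div_of_le hC
  exact le_add_of_nonneg_right (hSnn t)
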